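/- arXiv:math/0701115 — 3 statements merged into one kernel-verified Lean document; each statement's English description precedes it below -/
import Mathlib

section
/- If I is an ideal of the order O_f of conductor f in the ring of integers Z_K of an imaginary quadratic field K, and I is prime to f (i.e. I + f·O_f = O_f), then I is a proper O_f-ideal, meaning its multiplier ring {λ ∈ K : λI ⊆ I} equals O_f. -/
open NumberField Pointwise

/-- The order `O_f = ℤ + f·ℤ_K` of conductor `f` in a number field `K`,
realized as the ℤ-subalgebra generated by `f · (integral closure of ℤ in K)`. -/
noncomputable def order (K : Type*) [Field K] (f : ℕ) : Subalgebra ℤ K :=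
  Algebra.adjoin ℤ ((f : K) • ((integralClosure ℤ K : Subalgebra ℤ K) : Set K))

/-- If `I` is a nonzero ideal of the order `O_f` of conductor `f` in an imaginary
quadratic field `K` which is prime to `f` (i.e. `I + f·O_f = O_f`), then `I` is proper:
its multiplier ring `{λ ∈ K : λ·I ⊆ I}` equals `O_f`. -/
theorem stmt0 (K : Type*) [Field K] [NumberField K]
    (h2 : Module.finrank ℚ K = 2) (himag : ∀ φ : K →+* ℝ, False)
    (f : ℕ) (hf : 0 < f) (I : Ideal ↥(order K f)) (hI : I ≠ ⊥)
    (hprime : I ⊔ Ideal.span {(f : ↥(order K f))} = ⊤) :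
    {l : K | ∀ x ∈ Subtype.val '' (I : Set ↥(order K f)),
        l * x ∈ Subtype.val '' (I : Set ↥(order K f))}
      = (order K f : Set K) := by
  have hRint : order K f ≤ integralClosure ℤ K := by
    apply Algebra.adjoin_le
    rintro x ⟨y, hy, rfl⟩
    show (f : K) • y ∈ _
    rw [smul_eq_mul]
    exact mul_mem (Subalgebra.natCast_mem _ f) hy
  let J : Submodule ℤ K :=
    Submodule.map (Subalgebra.val (order K f)).toLinearMap
      (Submodule.restrictScalars ℤ (I : Submodule ↥(order K f) ↥(order K f)))
  have hJmem : ∀ x : K, x ∈ J ↔ x ∈ Subtype.val '' (I : Set ↥(order K f)) := by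
    intro x
    constructor
    · rintro ⟨y, hy, rfl⟩; exact ⟨y, hy, rfl⟩
    · rintro ⟨y, hy, rfl⟩; exact ⟨y, hy, rfl⟩
  have hOKfg : (Subalgebra.toSubmodule (integralClosure ℤ K)).FG := by
    have h1 : IsNoetherian ℤ (𝓞 K) := inferInstance
    have h := (h1.noetherian (⊤ : Submodule ℤ (𝓞 K))).map
      (Submodule.subtype (Subalgebra.toSubmodule (integralClosure ℤ K)))
    rw [← Submodule.range_subtype (Subalgebra.toSubmodule (integralClosure ℤ K)), LinearMap.range_eq_map]
    exact h
  have hJle : J ≤ Subalgebra.toSubmodule (integralClosure ℤ K) := by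
    rintro x ⟨y, _, rfl⟩
    exact hRint y.2
  have hJfg : J.FG := by
    have hnoeth : IsNoetherian ℤ ↥(Subalgebra.toSubmodule (integralClosure ℤ K)) :=
      isNoetherian_of_fg_of_noetherian _ hOKfg
    have h := (hnoeth.noetherian (Submodule.comap
      (Submodule.subtype (Subalgebra.toSubmodule (integralClosure ℤ K))) J)).map
      (Submodule.subtype (Subalgebra.toSubmodule (integralClosure ℤ K)))
    rwa [Submodule.map_comap_subtype, inf_eq_right.mpr hJle] at h
  have hJne : J ≠ ⊥ := by
    obtain ⟨y, hy, hy0⟩ := Submodule.exists_mem_ne_zero_of_ne_bot hI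
    intro h
    apply hy0
    have hyJ : (y : K) ∈ J := (hJmem _).mpr ⟨y, hy, rfl⟩
    rw [h, Submodule.mem_bot] at hyJ
    exact Subtype.ext hyJ
  ext l
  simp only [Set.mem_setOf_eq, SetLike.mem_coe]
  constructor
  · intro hl
    have hint : l ∈ integralClosure ℤ K := by
      refine isIntegral_of_smul_mem_submodule J hJne hJfg l ?_
      intro n hn
      rw [smul_eq_mul]
      exact (hJmem _).mpr (hl n ((hJmem _).mp hn))
    have hfl : (f : K) * l ∈ order K f := by
      apply Algebra.subset_adjoin
      exact ⟨l, hint, rfl⟩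
    have h1 : (1 : ↥(order K f)) ∈ I ⊔ Ideal.span {(f : ↥(order K f))} :=
      hprime ▸ Submodule.mem_top
    obtain ⟨a, ha, z, hz, hsum⟩ := Submodule.mem_sup.mp h1
    obtain ⟨c, hc⟩ := Ideal.mem_span_singleton'.mp hz
    have hla : l * (a : K) ∈ order K f := by
      obtain ⟨w, _, hw⟩ := hl (a : K) ⟨a, ha, rfl⟩
      rw [← hw]; exact w.2
    have hone : (a : K) + (c : K) * (f : K) = 1 := by
      have h2' := congrArg (Subtype.val) hsum
      rw [← hc] at h2'
      push_cast at h2'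
      exact h2'
    have key : l = l * (a : K) + (c : K) * ((f : K) * l) := by
      calc l = l * ((a : K) + (c : K) * (f : K)) := by rw [hone, mul_one]
        _ = l * (a : K) + (c : K) * ((f : K) * l) := by ring
    rw [key]
    exact add_mem hla (mul_mem c.2 hfl)
  · rintro hr x ⟨y, hy, rfl⟩
    exact ⟨⟨l, hr⟩ * y, I.mul_mem_left _ hy, rfl⟩
end

section
/- Let I_f be an O_f-ideal prime to m·f (for positive integers m, f), let J = I_f·Z_K and I_{mf} = J ∩ O_{mf}. Then I_{mf}·O_f = I_f. -/
open NumberField Pointwise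

lemma order_le_integralClosure (K : Type*) [Field K] (f : ℕ) :
    order K f ≤ integralClosure ℤ K := by
  apply Algebra.adjoin_le
  rintro x ⟨z, hz, rfl⟩
  simpa [smul_eq_mul] using mul_mem (Subalgebra.natCast_mem (integralClosure ℤ K) f) hz

lemma natCast_mul_mem_order (K : Type*) [Field K] (n : ℕ) {z : K}
    (hz : z ∈ integralClosure ℤ K) : (n : K) * z ∈ order K n :=
  Algebra.subset_adjoin ⟨z, hz, by simp [smul_eq_mul]⟩

lemma order_mul_le (K : Type*) [Field K] (m f : ℕ) : order K (m * f) ≤ order K f := by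
  apply Algebra.adjoin_le
  rintro x ⟨z, hz, rfl⟩
  apply Algebra.subset_adjoin
  refine ⟨(m : K) * z, mul_mem (Subalgebra.natCast_mem _ m) hz, ?_⟩
  simp only [smul_eq_mul]
  push_cast
  ring

instance orderNoZeroSMul (K : Type*) [Field K] [NumberField K] (f : ℕ) :
    NoZeroSMulDivisors ℤ ↥(order K f) := by
  constructor
  intro c x h
  have h' : (c : ℚ) • (x : K) = 0 := by
    have := congrArg (Subtype.val) h
    push_cast at this ⊢
    simpa [zsmul_eq_mul] using this
  rcases smul_eq_zero.mp h' with hc | hx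
  · exact Or.inl (by exact_mod_cast hc)
  · exact Or.inr (by ext; simpa using hx)

instance orderFinite (K : Type*) [Field K] [NumberField K] (f : ℕ) :
    Module.Finite ℤ ↥(order K f) := by
  haveI : IsNoetherian ℤ ↥(integralClosure ℤ K) := inferInstanceAs (IsNoetherian ℤ (𝓞 K))
  haveI : IsNoetherian ℤ ↥(order K f) :=
    isNoetherian_of_injective ((Subalgebra.inclusion (order_le_integralClosure K f)).toLinearMap)
      (Subalgebra.inclusion_injective (order_le_integralClosure K f))
  infer_instance

example (K : Type*) [Field K] [NumberField K] (f : ℕ) : Module.Free ℤ ↥(order K f) :=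
  inferInstance

set_option synthInstance.maxHeartbeats 400000 in
lemma exists_int_in_ideal (K : Type*) [Field K] [NumberField K] (f N : ℕ)
    (If : Ideal ↥(order K f))
    (h : If ⊔ Ideal.span {(N : ↥(order K f))} = ⊤) :
    ∃ c : ℤ, ((1 + N * c : ℤ) : ↥(order K f)) ∈ If := by
  classical
  set R := ↥(order K f)
  have h1 : (1 : R) ∈ If ⊔ Ideal.span {(N : R)} := h ▸ trivial
  obtain ⟨i, hi, y, hy, hiy⟩ := Submodule.mem_sup.mp h1
  obtain ⟨u, hu⟩ := Ideal.mem_span_singleton'.mp hy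
  have hieq : i = 1 - u * (N : R) := by rw [← hiy, ← hu]; ring
  let b := Module.Free.chooseBasis ℤ R
  let L : R →ₗ[ℤ] R := LinearMap.mulLeft ℤ i
  let M := LinearMap.toMatrix b b L
  have hmem : ((M.det : ℤ) : R) ∈ If := by
    have hadj := Matrix.mul_adjugate M
    have key := congrArg (fun A => (Matrix.toLin b b A) 1) hadj
    simp only [Matrix.toLin_mul b b b, LinearMap.comp_apply] at key
    rw [Matrix.toLin_toMatrix] at key
    have hrhs : (Matrix.toLin b b) (M.det • (1 : Matrix _ _ ℤ)) = M.det • LinearMap.id := by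
      rw [LinearEquiv.map_smul, Matrix.toLin_one]
    rw [hrhs] at key
    have : L ((Matrix.toLin b b M.adjugate) 1) = ((M.det : ℤ) : R) := by
      rw [key]
      simp [zsmul_eq_mul]
    rw [← this]
    exact Ideal.mul_mem_right _ _ hi
  have hL : L = LinearMap.id - (N : ℤ) • LinearMap.mulLeft ℤ u := by
    ext x
    simp only [L, LinearMap.mulLeft_apply, LinearMap.sub_apply, LinearMap.id_apply,
      LinearMap.smul_apply]
    rw [hieq, zsmul_eq_mul]
    push_cast
    congr 1
    ring
  have hM : M = 1 - (N : ℤ) • LinearMap.toMatrix b b (LinearMap.mulLeft ℤ u) := by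
    rw [show M = LinearMap.toMatrix b b L from rfl, hL,
      map_sub (LinearMap.toMatrix b b), LinearEquiv.map_smul, LinearMap.toMatrix_id]
  have hcong : (N : ℤ) ∣ M.det - 1 := by
    have hdet1 : ((M.det : ℤ) : ZMod N) = 1 := by
      have h1' : ((M.det : ℤ) : ZMod N) = (M.map (fun x : ℤ => (x : ZMod N))).det := by
        have := (Int.castRingHom (ZMod N)).map_det M
        rwa [RingHom.mapMatrix_apply, Int.coe_castRingHom] at this
      rw [h1', hM]
      have hmap : ((1 - (N : ℤ) • LinearMap.toMatrix b b (LinearMap.mulLeft ℤ u)).map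
          (fun x : ℤ => (x : ZMod N))) = 1 := by
        ext ij jj
        simp only [Matrix.map_apply, Matrix.sub_apply, Matrix.smul_apply, smul_eq_mul]
        by_cases hij : ij = jj <;>
          simp [Matrix.one_apply, hij, ZMod.natCast_self]
      rw [hmap, Matrix.det_one]
    have : ((M.det - 1 : ℤ) : ZMod N) = 0 := by push_cast [hdet1]; ring
    exact (ZMod.intCast_zmod_eq_zero_iff_dvd _ _).mp this
  obtain ⟨c, hc⟩ := hcong
  refine ⟨c, ?_⟩
  have heq : (1 + (N : ℤ) * c) = M.det := by omega
  rw [heq]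
  exact hmem

/-- Let `I_f` be an `O_f`-ideal prime to `m·f`, let `J = I_f·ℤ_K` and
`I_{mf} = J ∩ O_{mf}`. Then `I_{mf}·O_f = I_f` (all computed as subsets of `K`,
with products of ideals realized as ℤ-spans of sets of pairwise products). -/
theorem stmt2 (K : Type*) [Field K] [NumberField K]
    (h2 : Module.finrank ℚ K = 2) (himag : ∀ φ : K →+* ℝ, False)
    (m f : ℕ) (hm : 0 < m) (hf : 0 < f)
    (If : Ideal ↥(order K f))
    (hprime : If ⊔ Ideal.span {((m * f : ℕ) : ↥(order K f))} = ⊤)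
    (Sf Jset Imf : Set K)
    (hSf : Sf = Subtype.val '' (If : Set ↥(order K f)))
    (hJ : Jset = (Submodule.span ℤ {z : K | ∃ x ∈ Sf,
        ∃ y ∈ ((integralClosure ℤ K : Subalgebra ℤ K) : Set K), z = x * y} : Submodule ℤ K))
    (hImf : Imf = Jset ∩ (order K (m * f) : Set K)) :
    ((Submodule.span ℤ {z : K | ∃ x ∈ Imf, ∃ y ∈ (order K f : Set K), z = x * y} :
        Submodule ℤ K) : Set K) = Sf := by
  classical
  obtain ⟨c, hac⟩ := exists_int_in_ideal K f (m * f) If hprime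
  set a : ℤ := 1 + ((m * f : ℕ) : ℤ) * c with ha_def
  have ha : ((a : ℤ) : ↥(order K f)) ∈ If := hac
  have hNf : ∀ {x : K}, x ∈ order K (m * f) → x ∈ order K f :=
    fun hx => order_mul_le K m f hx
  have hIC : ∀ {x : K}, x ∈ order K f → x ∈ integralClosure ℤ K :=
    fun hx => order_le_integralClosure K f hx
  -- the ideal `If` as a ℤ-submodule of `K`
  set SfM : Submodule ℤ K :=
    Submodule.map (Subalgebra.val (order K f)).toLinearMap (Submodule.restrictScalars ℤ If)
    with hSfM_def
  have hSfM : (SfM : Set K) = Sf := by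
    rw [hSf]
    rfl
  -- the span defining `Jset` as a submodule
  set JM : Submodule ℤ K := Submodule.span ℤ {z : K | ∃ x ∈ Sf,
      ∃ y ∈ ((integralClosure ℤ K : Subalgebra ℤ K) : Set K), z = x * y} with hJM_def
  -- J absorbs multiplication by integral elements
  have F1 : ∀ (y : K), y ∈ integralClosure ℤ K → ∀ x ∈ JM, x * y ∈ JM := by
    intro y hy x hx
    induction hx using Submodule.span_induction with
    | mem z hz =>
        obtain ⟨s, hs, w, hw, rfl⟩ := hz
        exact Submodule.subset_span ⟨s, hs, w * y, mul_mem hw hy, (mul_assoc _ _ _)⟩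
    | zero => simpa using JM.zero_mem
    | add x1 x2 _ _ h1 h2 => rw [add_mul]; exact JM.add_mem h1 h2
    | smul c' x1 _ h1 => rw [smul_mul_assoc]; exact JM.smul_mem c' h1
  -- N·J ⊆ If
  have F2 : ∀ x ∈ JM, ((m * f : ℕ) : K) * x ∈ SfM := by
    intro x hx
    induction hx using Submodule.span_induction with
    | mem z hz =>
        obtain ⟨s, hs, w, hw, rfl⟩ := hz
        rw [hSf] at hs
        obtain ⟨s', hs', rfl⟩ := hs
        refine Submodule.mem_map.mpr
          ⟨s' * ⟨((m * f : ℕ) : K) * w, hNf (natCast_mul_mem_order K (m * f) hw)⟩,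
            Ideal.mul_mem_right _ _ hs', ?_⟩
        show (s' : K) * (((m * f : ℕ) : K) * w) = ((m * f : ℕ) : K) * ((s' : K) * w)
        ring
    | zero => simpa using SfM.zero_mem
    | add x1 x2 _ _ h1 h2 => rw [mul_add]; exact SfM.add_mem h1 h2
    | smul c' x1 _ h1 => rw [mul_smul_comm]; exact SfM.smul_mem c' h1
  -- elements of `J ∩ O_f` lie in `If`
  have CLAIM : ∀ v : K, v ∈ JM → v ∈ order K f → v ∈ SfM := by
    intro v hvJ hvR
    have t1 : v * ((a : ℤ) : K) ∈ SfM := by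
      refine Submodule.mem_map.mpr
        ⟨⟨v, hvR⟩ * ((a : ℤ) : ↥(order K f)), Ideal.mul_mem_left _ _ ha, ?_⟩
      show v * (((a : ℤ) : ↥(order K f)) : K) = v * ((a : ℤ) : K)
      norm_cast
    have t2 : ((m * f : ℕ) : K) * v ∈ SfM := F2 v hvJ
    have hv : v = v * ((a : ℤ) : K) - c • (((m * f : ℕ) : K) * v) := by
      rw [zsmul_eq_mul, ha_def]
      push_cast
      ring
    rw [hv]
    exact SfM.sub_mem t1 (SfM.smul_mem c t2)
  have haK : ((a : ℤ) : K) ∈ Sf := by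
    rw [hSf]
    exact ⟨((a : ℤ) : ↥(order K f)), ha, by norm_cast⟩
  ext w
  constructor
  · intro hw
    have hle : Submodule.span ℤ {z : K | ∃ x ∈ Imf, ∃ y ∈ (order K f : Set K), z = x * y}
        ≤ SfM := by
      rw [Submodule.span_le]
      rintro z ⟨x, hx, y, hy, rfl⟩
      rw [hImf] at hx
      obtain ⟨hxJ, hxO⟩ := hx
      rw [hJ] at hxJ
      exact CLAIM (x * y) (F1 y (hIC hy) x hxJ) (mul_mem (hNf hxO) hy)
    rw [← hSfM]
    exact hle hw
  · intro hw
    rw [hSf] at hw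
    obtain ⟨w', hw', rfl⟩ := hw
    have hwR : (w' : K) ∈ order K f := w'.2
    have hwIC : (w' : K) ∈ integralClosure ℤ K := hIC hwR
    have haJ : ((a : ℤ) : K) ∈ Jset := by
      rw [hJ]
      exact Submodule.subset_span ⟨_, haK, 1, one_mem (integralClosure ℤ K), (mul_one _).symm⟩
    have haO : ((a : ℤ) : K) ∈ order K (m * f) := Subalgebra.intCast_mem _ a
    have haImf : ((a : ℤ) : K) ∈ Imf := by rw [hImf]; exact ⟨haJ, haO⟩
    have t1 : ((a : ℤ) : K) * (w' : K) ∈ Submodule.span ℤ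
        {z : K | ∃ x ∈ Imf, ∃ y ∈ (order K f : Set K), z = x * y} :=
      Submodule.subset_span ⟨_, haImf, _, hwR, rfl⟩
    have hNwJ : ((m * f : ℕ) : K) * (w' : K) ∈ Jset := by
      rw [hJ]
      refine Submodule.subset_span ⟨(w' : K), ?_, ((m * f : ℕ) : K),
        Subalgebra.natCast_mem _ _, by ring⟩
      rw [hSf]
      exact ⟨w', hw', rfl⟩
    have hNwImf : ((m * f : ℕ) : K) * (w' : K) ∈ Imf := by
      rw [hImf]
      exact ⟨hNwJ, natCast_mul_mem_order K (m * f) hwIC⟩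
    have t2 : (((m * f : ℕ) : K) * (w' : K)) * 1 ∈ Submodule.span ℤ
        {z : K | ∃ x ∈ Imf, ∃ y ∈ (order K f : Set K), z = x * y} :=
      Submodule.subset_span ⟨_, hNwImf, 1, one_mem (order K f), rfl⟩
    have hv : (w' : K) = ((a : ℤ) : K) * (w' : K)
        - c • ((((m * f : ℕ) : K) * (w' : K)) * 1) := by
      rw [mul_one, zsmul_eq_mul, ha_def]
      push_cast
      ring
    rw [SetLike.mem_coe, hv]
    exact Submodule.sub_mem _ t1 (Submodule.smul_mem _ c t2)
end

section
/- If Q[a,b,c] and Q[a′,b′,c′] are matrices in Q_d (same discriminant d = b²−4ac = b′²−4a′c′ < 0) representing even positive-definite binary lattices in the same genus, then gcd(a,b,c) = gcd(a′,b′,c′). -/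
open Matrix

/-- The matrix `Q[a,b,c] = [[2a,b],[b,2c]]`. -/
def Qmat (a b c : ℤ) : Matrix (Fin 2) (Fin 2) ℤ := !![2 * a, b; b, 2 * c]

/-- If an integer divides another in every `ℤ_[p]`, it divides it in `ℤ`. -/
lemma int_dvd_of_padic (m n : ℤ) (hm : m ≠ 0)
    (h : ∀ (p : ℕ) (_ : Fact p.Prime), (m : ℤ_[p]) ∣ (n : ℤ_[p])) : m ∣ n := by
  rcases eq_or_ne n 0 with rfl | hn
  · exact dvd_zero m
  rw [← Int.natAbs_dvd_natAbs,
    ← Nat.factorization_le_iff_dvd (by simpa using hm) (by simpa using hn)]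
  intro p
  by_cases hp : p.Prime
  · haveI : Fact p.Prime := ⟨hp⟩
    set k := m.natAbs.factorization p with hk
    have h1 : ((p:ℤ)^k) ∣ m :=
      Int.dvd_natAbs.mp (by exact_mod_cast Nat.ordProj_dvd m.natAbs p)
    have h2 : (((p:ℤ_[p]))^k) ∣ (n : ℤ_[p]) := by
      refine dvd_trans ?_ (h p ⟨hp⟩)
      have := map_dvd (Int.castRingHom ℤ_[p]) h1
      simpa using this
    have h3 : ((p:ℤ)^k) ∣ n := (PadicInt.pow_p_dvd_int_iff k n).mp h2
    have h4 : p^k ∣ n.natAbs := by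
      have := Int.dvd_natAbs.mpr h3
      exact_mod_cast this
    exact (Nat.Prime.pow_dvd_iff_le_factorization hp (by simpa using hn)).mp h4
  · simp [Nat.factorization_eq_zero_of_not_prime _ hp]

/-- One-sided p-adic step: an equivalence over `ℤ_[p]` makes the content of the
first form divide the content of the second in `ℤ_[p]`. -/
lemma padic_gcd_dvd (p : ℕ) [Fact p.Prime] (a b c a' b' c' : ℤ)
    (g : Matrix (Fin 2) (Fin 2) ℤ_[p])
    (heq : gᵀ * (Qmat a b c).map (fun t => (t : ℤ_[p])) * g
          = (Qmat a' b' c').map (fun t => (t : ℤ_[p]))) :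
    ((Int.gcd a (Int.gcd b c) : ℤ) : ℤ_[p]) ∣ ((Int.gcd a' (Int.gcd b' c') : ℤ) : ℤ_[p]) := by
  set G : ℤ := (Int.gcd a (Int.gcd b c) : ℤ) with hG
  have hGa : G ∣ a := Int.gcd_dvd_left _ _
  have hGbc : G ∣ (Int.gcd b c : ℤ) := Int.gcd_dvd_right _ _
  have hGb : G ∣ b := hGbc.trans (Int.gcd_dvd_left _ _)
  have hGc : G ∣ c := hGbc.trans (Int.gcd_dvd_right _ _)
  have cast_dvd : ∀ {x y : ℤ}, x ∣ y → ((x:ℤ_[p]) ∣ (y:ℤ_[p])) := fun h => by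
    have := map_dvd (Int.castRingHom ℤ_[p]) h; simpa using this
  have Ga := cast_dvd hGa
  have Gb := cast_dvd hGb
  have Gc := cast_dvd hGc
  have h00 := congrFun (congrFun heq 0) 0
  have h01 := congrFun (congrFun heq 0) 1
  have h11 := congrFun (congrFun heq 1) 1
  simp [Qmat, Matrix.mul_apply, Fin.sum_univ_succ] at h00 h01 h11
  set P := g 0 0
  set R := g 1 0
  set Q := g 0 1
  set S := g 1 1
  have h2 : (2 : ℤ_[p]) ≠ 0 := two_ne_zero
  have ha'eq : (a' : ℤ_[p]) = (a:ℤ_[p]) * P^2 + (b:ℤ_[p]) * (P*R) + (c:ℤ_[p]) * R^2 := by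
    apply mul_left_cancel₀ h2
    linear_combination -h00
  have hc'eq : (c' : ℤ_[p]) = (a:ℤ_[p]) * Q^2 + (b:ℤ_[p]) * (Q*S) + (c:ℤ_[p]) * S^2 := by
    apply mul_left_cancel₀ h2
    linear_combination -h11
  have hb'eq : (b' : ℤ_[p]) = (a:ℤ_[p]) * (2*P*Q) + (b:ℤ_[p]) * (P*S + R*Q)
      + (c:ℤ_[p]) * (2*R*S) := by
    linear_combination -h01
  have da' : ((G:ℤ_[p])) ∣ (a' : ℤ_[p]) := by
    rw [ha'eq]; exact dvd_add (dvd_add (Ga.mul_right _) (Gb.mul_right _)) (Gc.mul_right _)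
  have dc' : ((G:ℤ_[p])) ∣ (c' : ℤ_[p]) := by
    rw [hc'eq]; exact dvd_add (dvd_add (Ga.mul_right _) (Gb.mul_right _)) (Gc.mul_right _)
  have db' : ((G:ℤ_[p])) ∣ (b' : ℤ_[p]) := by
    rw [hb'eq]; exact dvd_add (dvd_add (Ga.mul_right _) (Gb.mul_right _)) (Gc.mul_right _)
  -- now use Bezout to conclude divisibility of the gcd
  have hbc : ((G:ℤ_[p])) ∣ ((Int.gcd b' c' : ℤ) : ℤ_[p]) := by
    have h := Int.gcd_eq_gcd_ab b' c'
    have h' := congrArg (fun t : ℤ => (t : ℤ_[p])) h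
    push_cast at h' ⊢
    rw [h']
    exact dvd_add (db'.mul_right _) (dc'.mul_right _)
  have h := Int.gcd_eq_gcd_ab a' (Int.gcd b' c' : ℤ)
  have h' := congrArg (fun t : ℤ => (t : ℤ_[p])) h
  push_cast at h' hbc ⊢
  rw [h']
  exact dvd_add (da'.mul_right _) (hbc.mul_right _)

/-- If `Q[a,b,c]` and `Q[a′,b′,c′]` are positive-definite forms of the same
discriminant `d < 0` representing lattices in the same genus (i.e., equivalent over
`ℤ_p` for every prime `p`; equivalence over `ℝ` is automatic as both are positive
definite), then `gcd(a,b,c) = gcd(a′,b′,c′)`. -/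
theorem stmt14 (d : ℤ) (hdneg : d < 0)
    (a b c a' b' c' : ℤ) (ha : 0 < a) (hc : 0 < c) (ha' : 0 < a') (hc' : 0 < c')
    (hd : b ^ 2 - 4 * a * c = d) (hd' : b' ^ 2 - 4 * a' * c' = d)
    (hgenus : ∀ (p : ℕ) (_ : Fact p.Prime), ∃ g : Matrix (Fin 2) (Fin 2) ℤ_[p],
      IsUnit g.det ∧
        gᵀ * (Qmat a b c).map (fun t => (t : ℤ_[p])) * g
          = (Qmat a' b' c').map (fun t => (t : ℤ_[p]))) :
    Int.gcd a (Int.gcd b c) = Int.gcd a' (Int.gcd b' c') := by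
  have hGne : (Int.gcd a (Int.gcd b c) : ℤ) ≠ 0 := by
    simp only [ne_eq, Int.natCast_eq_zero, Int.gcd_eq_zero_iff, not_and_or]
    exact Or.inl ha.ne'
  have hG'ne : (Int.gcd a' (Int.gcd b' c') : ℤ) ≠ 0 := by
    simp only [ne_eq, Int.natCast_eq_zero, Int.gcd_eq_zero_iff, not_and_or]
    exact Or.inl ha'.ne'
  have fwd : (Int.gcd a (Int.gcd b c) : ℤ) ∣ (Int.gcd a' (Int.gcd b' c') : ℤ) := by
    apply int_dvd_of_padic _ _ hGne
    intro p hp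
    obtain ⟨g, _, heq⟩ := hgenus p hp
    exact padic_gcd_dvd p a b c a' b' c' g heq
  have bwd : (Int.gcd a' (Int.gcd b' c') : ℤ) ∣ (Int.gcd a (Int.gcd b c) : ℤ) := by
    apply int_dvd_of_padic _ _ hG'ne
    intro p hp
    obtain ⟨g, hunit, heq⟩ := hgenus p hp
    refine padic_gcd_dvd p a' b' c' a b c g⁻¹ ?_
    have hginv : g * g⁻¹ = 1 := Matrix.mul_nonsing_inv g hunit
    have hginv' : g⁻¹ * g = 1 := Matrix.nonsing_inv_mul g hunit
    calc (g⁻¹)ᵀ * (Qmat a' b' c').map (fun t => (t : ℤ_[p])) * g⁻¹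
        = (g⁻¹)ᵀ * (gᵀ * (Qmat a b c).map (fun t => (t : ℤ_[p])) * g) * g⁻¹ := by rw [heq]
      _ = (g * g⁻¹)ᵀ * (Qmat a b c).map (fun t => (t : ℤ_[p])) * (g * g⁻¹) := by
          rw [Matrix.transpose_mul]; simp only [Matrix.mul_assoc]
      _ = (Qmat a b c).map (fun t => (t : ℤ_[p])) := by
          rw [hginv]; simp
  have := Int.dvd_antisymm (by positivity) (by positivity) fwd bwd
  exact_mod_cast this
end
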